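/- arXiv:2501.19148 — 2 statements merged into one kernel-verified Lean document; each statement's English description precedes it below -/
import Mathlib

section
/- Under the setup of the sparsification lemma (S ⊆ C with Top_ℓ(d(C,S)) ≤ α·OPT; induced weighted instance with weights w), if T ⊆ C is a ρ-approximate ℓ-centrum solution for the weighted instance (i.e., the weighted Top_ℓ-cost of T is at most ρ·OPT'), then Top_ℓ(d(C,T)) ≤ (α + 2ρ(α + 1))·OPT. -/
open Finset

/-- `Topl ℓ v` : the sum of the `ℓ` largest entries of `v`, expressed as the
maximum subset-sum over subsets of cardinality `ℓ` (these agree for `ℓ ≤ n`). -/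
noncomputable def Topl {ι : Type*} [Fintype ι] (ℓ : ℕ) (v : ι → ℝ) : ℝ :=
  sSup {x : ℝ | ∃ S : Finset ι, S.card = ℓ ∧ x = ∑ i ∈ S, v i}

lemma topl_bdd {ι : Type*} [Fintype ι] (ℓ : ℕ) (v : ι → ℝ) :
    BddAbove {x : ℝ | ∃ S : Finset ι, S.card = ℓ ∧ x = ∑ i ∈ S, v i} := by
  apply Set.Finite.bddAbove
  apply Set.Finite.subset (Set.finite_range (fun S : Finset ι => ∑ i ∈ S, v i))
  rintro x ⟨S, _, rfl⟩; exact ⟨S, rfl⟩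

lemma topl_set_nonempty {ι : Type*} [Fintype ι] {ℓ : ℕ} (hℓ : ℓ ≤ Fintype.card ι)
    (v : ι → ℝ) :
    Set.Nonempty {x : ℝ | ∃ S : Finset ι, S.card = ℓ ∧ x = ∑ i ∈ S, v i} := by
  obtain ⟨t, _, hcard⟩ := Finset.exists_subset_card_eq
    (show ℓ ≤ (univ : Finset ι).card by simpa using hℓ)
  exact ⟨∑ i ∈ t, v i, t, hcard, rfl⟩

lemma topl_nonneg {ι : Type*} [Fintype ι] {ℓ : ℕ} (hℓ : ℓ ≤ Fintype.card ι)
    {v : ι → ℝ} (hv : ∀ i, 0 ≤ v i) : 0 ≤ Topl ℓ v := by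
  obtain ⟨x, S, hc, rfl⟩ := topl_set_nonempty hℓ v
  exact le_trans (Finset.sum_nonneg fun i _ => hv i)
    (le_csSup (topl_bdd ℓ v) ⟨S, hc, rfl⟩)

lemma topl_le_add {ι : Type*} [Fintype ι] {ℓ : ℕ} (hℓ : ℓ ≤ Fintype.card ι)
    {w u v : ι → ℝ} (h : ∀ j, w j ≤ u j + v j) :
    Topl ℓ w ≤ Topl ℓ u + Topl ℓ v := by
  apply csSup_le (topl_set_nonempty hℓ w)
  rintro x ⟨B, hc, rfl⟩
  calc ∑ i ∈ B, w i ≤ ∑ i ∈ B, (u i + v i) := Finset.sum_le_sum fun i _ => h i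
    _ = (∑ i ∈ B, u i) + ∑ i ∈ B, v i := Finset.sum_add_distrib
    _ ≤ Topl ℓ u + Topl ℓ v :=
      add_le_add (le_csSup (topl_bdd ℓ u) ⟨B, hc, rfl⟩)
        (le_csSup (topl_bdd ℓ v) ⟨B, hc, rfl⟩)

lemma costset_finite {C : Type*} [Fintype C] [MetricSpace C] (k ℓ : ℕ) (τ : C → C) :
    Set.Finite {x : ℝ | ∃ (T : Finset C) (hT : T.Nonempty),
      T.card ≤ k ∧ x = Topl ℓ (fun j => T.inf' hT (fun a => dist (τ j) a))} := by
  apply Set.Finite.subset (Set.finite_range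
    (fun T : Finset C => if h : T.Nonempty then
      Topl ℓ (fun j => T.inf' h (fun a => dist (τ j) a)) else 0))
  rintro x ⟨T, hT, _, rfl⟩
  exact ⟨T, by simp [dif_pos hT]⟩

theorem stmt7 {C : Type*} [Fintype C] [MetricSpace C] (k ℓ : ℕ)
    (hk : 1 ≤ k) (hℓ1 : 1 ≤ ℓ) (hℓ : ℓ ≤ Fintype.card C) (α ρ : ℝ) (hρ : 1 ≤ ρ)
    (S : Finset C) (hS : S.Nonempty)
    -- σ assigns each point to a nearest point of S (ties broken arbitrarily)
    (σ : C → C) (hσmem : ∀ j, σ j ∈ S)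
    (hσnear : ∀ j, dist j (σ j) = S.inf' hS (fun a => dist j a))
    (OPT : ℝ)
    (hOPT : OPT = sInf {x : ℝ | ∃ (T : Finset C) (hT : T.Nonempty),
      T.card ≤ k ∧ x = Topl ℓ (fun j => T.inf' hT (fun a => dist j a))})
    -- S is an α-approximate ℓ-centrum solution
    (hScost : Topl ℓ (fun j => S.inf' hS (fun a => dist j a)) ≤ α * OPT)
    -- OPT' : optimal ℓ-centrum value of the weighted instance (each agent j moved to σ j)
    (OPT' : ℝ)
    (hOPT' : OPT' = sInf {x : ℝ | ∃ (T : Finset C) (hT : T.Nonempty),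
      T.card ≤ k ∧ x = Topl ℓ (fun j => T.inf' hT (fun a => dist (σ j) a))})
    -- T is a ρ-approximate solution for the weighted instance
    (T : Finset C) (hT : T.Nonempty) (hTcard : T.card ≤ k)
    (hTapx : Topl ℓ (fun j => T.inf' hT (fun a => dist (σ j) a)) ≤ ρ * OPT') :
    Topl ℓ (fun j => T.inf' hT (fun a => dist j a)) ≤ (α + 2 * ρ * (α + 1)) * OPT := by
  obtain ⟨c, hc⟩ := id hS
  -- the OPT set, with id, is the same as costset with τ = id
  have hAfin : Set.Finite {x : ℝ | ∃ (T : Finset C) (hT : T.Nonempty),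
      T.card ≤ k ∧ x = Topl ℓ (fun j => T.inf' hT (fun a => dist j a))} :=
    costset_finite k ℓ id
  have hBfin : Set.Finite {x : ℝ | ∃ (T : Finset C) (hT : T.Nonempty),
      T.card ≤ k ∧ x = Topl ℓ (fun j => T.inf' hT (fun a => dist (σ j) a))} :=
    costset_finite k ℓ σ
  have hAne : Set.Nonempty {x : ℝ | ∃ (T : Finset C) (hT : T.Nonempty),
      T.card ≤ k ∧ x = Topl ℓ (fun j => T.inf' hT (fun a => dist j a))} :=
    ⟨_, {c}, Finset.singleton_nonempty c, by simpa using hk, rfl⟩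
  -- OPT is attained by some T*
  have hOPTmem := hAne.csInf_mem hAfin
  rw [← hOPT] at hOPTmem
  obtain ⟨Ts, hTs, hTscard, hOPTeq⟩ := hOPTmem
  -- nonnegativity facts
  have hdist_nonneg : ∀ (U : Finset C) (hU : U.Nonempty) (τ : C → C) (j : C),
      0 ≤ U.inf' hU (fun a => dist (τ j) a) := by
    intro U hU τ j
    exact Finset.le_inf' hU _ fun a _ => dist_nonneg
  have hOPT0 : 0 ≤ OPT := by
    rw [hOPTeq]
    exact topl_nonneg hℓ fun j => hdist_nonneg Ts hTs id j
  have hαOPT0 : 0 ≤ α * OPT :=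
    le_trans (topl_nonneg hℓ fun j => hdist_nonneg S ⟨c, hc⟩ id j) hScost
  -- OPT' ≤ cost of T* on the weighted instance
  have hOPT'le1 : OPT' ≤ Topl ℓ (fun j => Ts.inf' hTs (fun a => dist (σ j) a)) := by
    rw [hOPT']
    exact csInf_le hBfin.bddBelow ⟨Ts, hTs, hTscard, rfl⟩
  -- cost of T* on weighted instance ≤ Topl dS + OPT
  have hkey1 : Topl ℓ (fun j => Ts.inf' hTs (fun a => dist (σ j) a)) ≤
      Topl ℓ (fun j => S.inf' hS (fun a => dist j a)) +
      Topl ℓ (fun j => Ts.inf' hTs (fun a => dist j a)) := by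
    apply topl_le_add hℓ
    intro j
    obtain ⟨a0, ha0, heq⟩ := Ts.exists_mem_eq_inf' hTs (fun a => dist j a)
    calc Ts.inf' hTs (fun a => dist (σ j) a) ≤ dist (σ j) a0 :=
          Finset.inf'_le _ ha0
      _ ≤ dist (σ j) j + dist j a0 := dist_triangle _ _ _
      _ = S.inf' hS (fun a => dist j a) + Ts.inf' hTs (fun a => dist j a) := by
          rw [dist_comm, hσnear j, ← heq]
  have hOPT'le : OPT' ≤ α * OPT + OPT := by
    calc OPT' ≤ _ := hOPT'le1
      _ ≤ _ := hkey1
      _ ≤ α * OPT + OPT := by rw [← hOPTeq]; exact add_le_add_left hScost _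
  -- main bound
  have hmain : Topl ℓ (fun j => T.inf' hT (fun a => dist j a)) ≤
      Topl ℓ (fun j => S.inf' hS (fun a => dist j a)) +
      Topl ℓ (fun j => T.inf' hT (fun a => dist (σ j) a)) := by
    apply topl_le_add hℓ
    intro j
    obtain ⟨a0, ha0, heq⟩ := T.exists_mem_eq_inf' hT (fun a => dist (σ j) a)
    calc T.inf' hT (fun a => dist j a) ≤ dist j a0 := Finset.inf'_le _ ha0
      _ ≤ dist j (σ j) + dist (σ j) a0 := dist_triangle _ _ _
      _ = S.inf' hS (fun a => dist j a) + T.inf' hT (fun a => dist (σ j) a) := by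
          rw [hσnear j, ← heq]
  have hρ0 : (0:ℝ) ≤ ρ := le_trans zero_le_one hρ
  have hρOPT' : ρ * OPT' ≤ ρ * (α * OPT + OPT) :=
    mul_le_mul_of_nonneg_left hOPT'le hρ0
  nlinarith [mul_nonneg hρ0 (by linarith : (0:ℝ) ≤ α * OPT + OPT)]
end

section
/- Let (C,d) be a finite metric space, S̄ ⊆ C a center set with Top_ℓ(d(C,S̄)) ≤ β·OPT where OPT = min_{|T|≤k, T⊆C} Top_ℓ(d(C,T)). Let OPT_{C×S̄} denote the minimum of Top_ℓ(d(C,T)) over nonempty T ⊆ S̄ with |T| ≤ k. Then OPT_{C×S̄} ≤ 2·OPT + Top_ℓ(d(C,S̄)) ≤ (2 + β)·OPT. -/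
open Finset

lemma topl_set_finite {ι : Type*} [Fintype ι] (ℓ : ℕ) (v : ι → ℝ) :
    ({x : ℝ | ∃ S : Finset ι, S.card = ℓ ∧ x = ∑ i ∈ S, v i}).Finite := by
  apply Set.Finite.subset (Set.finite_range (fun S : Finset ι => ∑ i ∈ S, v i))
  rintro x ⟨S, _, rfl⟩; exact ⟨S, rfl⟩

lemma le_topl {ι : Type*} [Fintype ι] {ℓ : ℕ} (v : ι → ℝ) {S : Finset ι}
    (hS : S.card = ℓ) : ∑ i ∈ S, v i ≤ Topl ℓ v :=
  le_csSup (topl_set_finite ℓ v).bddAbove ⟨S, hS, rfl⟩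

lemma topl_le {ι : Type*} [Fintype ι] {ℓ : ℕ} (hℓ : ℓ ≤ Fintype.card ι)
    (v : ι → ℝ) {b : ℝ} (h : ∀ S : Finset ι, S.card = ℓ → ∑ i ∈ S, v i ≤ b) :
    Topl ℓ v ≤ b := by
  obtain ⟨S₀, _, hS₀⟩ := Finset.exists_subset_card_eq (s := (Finset.univ : Finset ι)) (n := ℓ)
    (by simpa using hℓ)
  exact csSup_le ⟨_, ⟨S₀, hS₀, rfl⟩⟩ (by rintro x ⟨S, hS, rfl⟩; exact h S hS)

lemma topl_add_le {ι : Type*} [Fintype ι] {ℓ : ℕ} (hℓ : ℓ ≤ Fintype.card ι)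
    (t u w : ι → ℝ) (h : ∀ i, t i ≤ 2 * u i + w i) :
    Topl ℓ t ≤ 2 * Topl ℓ u + Topl ℓ w := by
  apply topl_le hℓ
  intro S hS
  have h1 : ∑ i ∈ S, t i ≤ 2 * (∑ i ∈ S, u i) + ∑ i ∈ S, w i := by
    have := Finset.sum_le_sum (fun i (_ : i ∈ S) => h i)
    simpa [Finset.sum_add_distrib, Finset.mul_sum] using this
  have h2 := le_topl u hS
  have h3 := le_topl w hS
  linarith

theorem stmt18 {C : Type*} [Fintype C] [MetricSpace C] (k ℓ : ℕ)
    (hk : 1 ≤ k) (hℓ1 : 1 ≤ ℓ) (hℓn : ℓ ≤ Fintype.card C) (β : ℝ)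
    (Sbar : Finset C) (hSbar : Sbar.Nonempty)
    (OPT : ℝ)
    (hOPT : OPT = sInf {x : ℝ | ∃ (T : Finset C) (hT : T.Nonempty),
      T.card ≤ k ∧ x = Topl ℓ (fun j => T.inf' hT (fun a => dist j a))})
    (hSbarcost : Topl ℓ (fun j => Sbar.inf' hSbar (fun a => dist j a)) ≤ β * OPT)
    -- OPT_{C×S̄} : optimum over center sets contained in S̄
    (OPTcs : ℝ)
    (hOPTcs : OPTcs = sInf {x : ℝ | ∃ (T : Finset C) (hT : T.Nonempty),
      T ⊆ Sbar ∧ T.card ≤ k ∧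
      x = Topl ℓ (fun j => T.inf' hT (fun a => dist j a))}) :
    OPTcs ≤ 2 * OPT + Topl ℓ (fun j => Sbar.inf' hSbar (fun a => dist j a)) ∧
      2 * OPT + Topl ℓ (fun j => Sbar.inf' hSbar (fun a => dist j a)) ≤
        (2 + β) * OPT := by
  classical
  set dS : C → ℝ := fun j => Sbar.inf' hSbar (fun a => dist j a) with hdS
  -- second inequality
  have hsecond : 2 * OPT + Topl ℓ dS ≤ (2 + β) * OPT := by
    have : (2 + β) * OPT = 2 * OPT + β * OPT := by ring
    linarith
  refine ⟨?_, hsecond⟩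
  -- finiteness of the OPT set
  have hfinA : ∀ (P : Finset C → Prop),
      ({x : ℝ | ∃ (T : Finset C) (hT : T.Nonempty), P T ∧
        x = Topl ℓ (fun j => T.inf' hT (fun a => dist j a))}).Finite := by
    intro P
    apply Set.Finite.subset (Set.finite_range
      (fun T : Finset C => if h : T.Nonempty then
        Topl ℓ (fun j => T.inf' h (fun a => dist j a)) else 0))
    rintro x ⟨T, hT, _, rfl⟩
    exact ⟨T, by simp [hT]⟩
  have hC : Nonempty C := Fintype.card_pos_iff.mp (lt_of_lt_of_le hℓ1 hℓn)
  obtain ⟨j₀⟩ := hC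
  -- the OPT set is nonempty and finite; OPT is attained
  have hAne : ({x : ℝ | ∃ (T : Finset C) (hT : T.Nonempty),
      T.card ≤ k ∧ x = Topl ℓ (fun j => T.inf' hT (fun a => dist j a))}).Nonempty := by
    refine ⟨_, ⟨{j₀}, ⟨j₀, by simp⟩, by simpa using hk, rfl⟩⟩
  have hOPTmem : OPT ∈ {x : ℝ | ∃ (T : Finset C) (hT : T.Nonempty),
      T.card ≤ k ∧ x = Topl ℓ (fun j => T.inf' hT (fun a => dist j a))} := by
    rw [hOPT]
    exact Set.Nonempty.csInf_mem hAne (hfinA (fun T => T.card ≤ k))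
  obtain ⟨T, hT, hTk, hTopt⟩ := hOPTmem
  -- nearest point in Sbar to each point
  have hg : ∀ a : C, ∃ b ∈ Sbar, dist a b = Sbar.inf' hSbar (fun b => dist a b) := by
    intro a
    obtain ⟨b, hb, hbe⟩ := Sbar.exists_mem_eq_inf' hSbar (fun b => dist a b)
    exact ⟨b, hb, hbe.symm⟩
  choose g hgmem hgdist using hg
  set T' : Finset C := T.image g with hT'
  have hT'ne : T'.Nonempty := hT.image g
  have hT'sub : T' ⊆ Sbar := by
    intro x hx
    obtain ⟨a, _, rfl⟩ := Finset.mem_image.mp hx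
    exact hgmem a
  have hT'k : T'.card ≤ k := le_trans (Finset.card_image_le) hTk
  -- pointwise bound
  have hpoint : ∀ j : C, T'.inf' hT'ne (fun a => dist j a) ≤
      2 * T.inf' hT (fun a => dist j a) + dS j := by
    intro j
    obtain ⟨a, haT, ha⟩ := T.exists_mem_eq_inf' hT (fun b => dist j b)
    obtain ⟨a'', ha''S, ha''⟩ := Sbar.exists_mem_eq_inf' hSbar (fun b => dist j b)
    have h1 : T'.inf' hT'ne (fun b => dist j b) ≤ dist j (g a) :=
      Finset.inf'_le _ (Finset.mem_image_of_mem g haT)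
    have h2 : dist j (g a) ≤ dist j a + dist a (g a) := dist_triangle j a (g a)
    have h3 : dist a (g a) ≤ dist a a'' := by
      rw [hgdist a]
      exact Finset.inf'_le _ ha''S
    have h4 : dist a a'' ≤ dist a j + dist j a'' := dist_triangle a j a''
    have h5 : dist a j = dist j a := dist_comm a j
    rw [ha]
    have hdSj : dS j = dist j a'' := ha''
    linarith
  -- OPTcs ≤ cost of T'
  have hcs : OPTcs ≤ Topl ℓ (fun j => T'.inf' hT'ne (fun a => dist j a)) := by
    rw [hOPTcs]
    have hfin := hfinA (fun T => T ⊆ Sbar ∧ T.card ≤ k)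
    have hsetEq : {x : ℝ | ∃ (T : Finset C) (hT : T.Nonempty),
        T ⊆ Sbar ∧ T.card ≤ k ∧
        x = Topl ℓ (fun j => T.inf' hT (fun a => dist j a))} =
        {x : ℝ | ∃ (T : Finset C) (hT : T.Nonempty), (T ⊆ Sbar ∧ T.card ≤ k) ∧
        x = Topl ℓ (fun j => T.inf' hT (fun a => dist j a))} := by
      ext x; constructor
      · rintro ⟨T, h1, h2, h3, h4⟩; exact ⟨T, h1, ⟨h2, h3⟩, h4⟩
      · rintro ⟨T, h1, ⟨h2, h3⟩, h4⟩; exact ⟨T, h1, h2, h3, h4⟩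
    rw [hsetEq]
    exact csInf_le hfin.bddBelow ⟨T', hT'ne, ⟨hT'sub, hT'k⟩, rfl⟩
  have hmain : Topl ℓ (fun j => T'.inf' hT'ne (fun a => dist j a)) ≤
      2 * Topl ℓ (fun j => T.inf' hT (fun a => dist j a)) + Topl ℓ dS :=
    topl_add_le hℓn _ _ _ hpoint
  rw [← hTopt] at hmain
  linarith
end
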